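/- Define for Re(ε) < 0 the typical quantum dimension T(λ) = q_ε^{2λ−α₀} · sin(−πα₊εi)/sin(πα₋εi), q_ε = e^{πε}. Then T(λ)·T(μ) = ∑_{ℓ=0}^{p−1} T(λ + μ + ℓα₋). -/

import Mathlib

open Complex

/-- `α₊ = √(2p)`. -/
noncomputable def alphaP (p : ℕ) : ℂ := (Real.sqrt (2 * p) : ℝ)

/-- `α₋ = −√(2/p)`. -/
noncomputable def alphaM (p : ℕ) : ℂ := -(Real.sqrt (2 / p) : ℝ)

/-- `α₀ = α₊ + α₋`. -/
noncomputable def alpha0 (p : ℕ) : ℂ := alphaP p + alphaM p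

/-- Typical quantum dimension `T(λ) = q_ε^{2λ−α₀} sin(−πα₊εi)/sin(πα₋εi)`, `q_ε = e^{πε}`. -/
noncomputable def qdimF (p : ℕ) (ε lam : ℂ) : ℂ :=
  Complex.exp ((Real.pi : ℂ) * ε * (2 * lam - alpha0 p)) *
    Complex.sin (-(Real.pi : ℂ) * alphaP p * ε * I) / Complex.sin ((Real.pi : ℂ) * alphaM p * ε * I)

lemma alphaP_eq (p : ℕ) (hp : 2 ≤ p) : alphaP p = -(p : ℂ) * alphaM p := by
  have hp0 : (p:ℝ) ≠ 0 := by positivity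
  have h : Real.sqrt (2 * p) = p * Real.sqrt (2 / p) := by
    rw [show (2 * (p:ℝ)) = (p:ℝ)^2 * (2 / p) by field_simp,
      Real.sqrt_mul (sq_nonneg _), Real.sqrt_sq (by positivity)]
  unfold alphaP alphaM
  rw [h]; push_cast; ring

lemma sin1_ne (p : ℕ) (hp : 2 ≤ p) (ε : ℂ) (hε : ε.re < 0) :
    Complex.sin ((Real.pi : ℂ) * alphaM p * ε * I) ≠ 0 := by
  intro h
  rw [Complex.sin_eq_zero_iff] at h
  obtain ⟨k, hk⟩ := h
  have him := congrArg Complex.im hk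
  simp [alphaM, Complex.mul_im, Complex.mul_re] at him
  rcases him with h | h
  · omega
  · linarith

theorem stmt18 (p : ℕ) (hp : 2 ≤ p) (ε : ℂ) (hε : ε.re < 0) (lam μ : ℂ) :
    qdimF p ε lam * qdimF p ε μ =
      ∑ l ∈ Finset.range p, qdimF p ε (lam + μ + (l : ℂ) * alphaM p) := by
  have hs := sin1_ne p hp ε hε
  obtain ⟨m, rfl⟩ : ∃ m, p = m + 1 := ⟨p - 1, by omega⟩
  set p := m + 1 with hpdef
  set u : ℂ := Complex.exp ((Real.pi : ℂ) * ε * alphaM p) with hu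
  have hu0 : u ≠ 0 := Complex.exp_ne_zero _
  have e1 : -((Real.pi:ℂ) * alphaM p * ε * I) * I = (Real.pi:ℂ) * ε * alphaM p := by
    linear_combination (-((Real.pi:ℂ) * alphaM p * ε)) * Complex.I_mul_I
  have e2 : ((Real.pi:ℂ) * alphaM p * ε * I) * I = -((Real.pi:ℂ) * ε * alphaM p) := by
    linear_combination ((Real.pi:ℂ) * alphaM p * ε) * Complex.I_mul_I
  have e3 : -(-(Real.pi:ℂ) * alphaP p * ε * I) * I = (p:ℕ) * ((Real.pi:ℂ) * ε * alphaM p) := by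
    linear_combination ((Real.pi:ℂ)*ε*I*I) * alphaP_eq p hp
      + (-(p:ℂ)*(Real.pi:ℂ)*alphaM p*ε) * Complex.I_mul_I
  have e4 : (-(Real.pi:ℂ) * alphaP p * ε * I) * I = -((p:ℕ) * ((Real.pi:ℂ) * ε * alphaM p)) := by
    linear_combination (-((Real.pi:ℂ)*ε*I*I)) * alphaP_eq p hp
      + ((p:ℂ)*(Real.pi:ℂ)*alphaM p*ε) * Complex.I_mul_I
  have hsin1 : Complex.sin ((Real.pi : ℂ) * alphaM p * ε * I) = (u - u⁻¹) * I / 2 := by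
    rw [Complex.sin, e1, e2, Complex.exp_neg, ← hu]
  have hsinp : Complex.sin (-(Real.pi : ℂ) * alphaP p * ε * I)
      = (u ^ p - (u ^ p)⁻¹) * I / 2 := by
    rw [Complex.sin, e3, e4, Complex.exp_neg, Complex.exp_nat_mul, ← hu]
  have hexp : ∀ ν : ℂ, Complex.exp ((Real.pi : ℂ) * ε * (2 * ν - alpha0 p)) =
      Complex.exp ((Real.pi : ℂ) * ε * (2 * ν)) * u ^ m := by
    intro ν
    rw [hu, ← Complex.exp_nat_mul, ← Complex.exp_add]
    congr 1
    unfold alpha0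
    rw [alphaP_eq p hp, hpdef]
    push_cast
    ring
  have hS1 : (u - u⁻¹) * I / 2 ≠ 0 := hsin1 ▸ hs
  have key : u ^ m * ((u ^ p - (u ^ p)⁻¹) * I / 2) / ((u - u⁻¹) * I / 2)
      = ∑ l ∈ Finset.range p, u ^ (2 * l) := by
    have hg : (∑ l ∈ Finset.range p, (u ^ 2) ^ l) * (u ^ 2 - 1) = (u ^ 2) ^ p - 1 :=
      geom_sum_mul _ _
    simp only [pow_mul]
    rw [div_eq_iff hS1]
    have hup : u ^ p ≠ 0 := pow_ne_zero _ hu0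
    field_simp
    linear_combination (-(u ^ p)) * hg
  unfold qdimF
  have hterm : ∀ l ∈ Finset.range p,
      Complex.exp ((Real.pi : ℂ) * ε * (2 * (lam + μ + (l:ℂ) * alphaM p) - alpha0 p)) *
        Complex.sin (-(Real.pi : ℂ) * alphaP p * ε * I) /
        Complex.sin ((Real.pi : ℂ) * alphaM p * ε * I)
      = (Complex.exp ((Real.pi : ℂ) * ε * (2 * lam)) * Complex.exp ((Real.pi : ℂ) * ε * (2 * μ))
          * (u ^ m * ((u ^ p - (u ^ p)⁻¹) * I / 2) / ((u - u⁻¹) * I / 2))) * u ^ (2 * l) := by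
    intro l _
    rw [hsinp, hsin1, hexp (lam + μ + (l:ℂ) * alphaM p)]
    rw [show (Real.pi : ℂ) * ε * (2 * (lam + μ + (l:ℂ) * alphaM p))
        = (Real.pi : ℂ) * ε * (2 * lam) + (Real.pi : ℂ) * ε * (2 * μ)
          + (2 * l : ℕ) * ((Real.pi : ℂ) * ε * alphaM p) by push_cast; ring]
    rw [Complex.exp_add, Complex.exp_add, Complex.exp_nat_mul, ← hu]
    ring
  rw [Finset.sum_congr rfl hterm, ← Finset.mul_sum, ← key, hsinp, hsin1, hexp lam, hexp μ]
  ring
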